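/- Let V be an F₂-vector space of dimension 2p with p ≥ 2, equipped with a nondegenerate alternating bilinear form ω. Suppose V ∖ {0} is partitioned into disjoint subsets T and P such that for all nonzero x, y with ω(x,y) = 1: if x, y ∈ T then x + y ∈ T; if x ∈ T and y ∈ P (or x ∈ P and y ∈ T) then x + y ∈ P; and if x, y ∈ P then x + y ∈ T. Then it cannot happen simultaneously that there exist distinct x₁, y₁ ∈ P with ω(x₁,y₁) = 0 and x₁ + y₁ ∈ P, and distinct x₂, y₂ ∈ P with ω(x₂,y₂) = 0 and x₂ + y₂ ∈ T. In other words, either every sum of two distinct ω-orthogonal elements of P lies in T, or every such sum lies in P. -/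
import Mathlib

theorem stmt_13 {V : Type*} [AddCommGroup V] [Module (ZMod 2) V]
    [Module.Finite (ZMod 2) V]
    (p : ℕ) (hp : 2 ≤ p) (hdim : Module.finrank (ZMod 2) V = 2 * p)
    (ω : V →ₗ[ZMod 2] V →ₗ[ZMod 2] ZMod 2)
    (halt : ∀ v, ω v v = 0)
    (hnd : ∀ v, (∀ w, ω v w = 0) → v = 0)
    (T P : Set V)
    (hcover : T ∪ P = {v : V | v ≠ 0})
    (hdisj : T ∩ P = ∅)
    (hTT : ∀ x ∈ T, ∀ y ∈ T, ω x y = 1 → x + y ∈ T)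
    (hTP : ∀ x ∈ T, ∀ y ∈ P, ω x y = 1 → x + y ∈ P)
    (hPT : ∀ x ∈ P, ∀ y ∈ T, ω x y = 1 → x + y ∈ P)
    (hPP : ∀ x ∈ P, ∀ y ∈ P, ω x y = 1 → x + y ∈ T) :
    ¬ ((∃ x ∈ P, ∃ y ∈ P, x ≠ y ∧ ω x y = 0 ∧ x + y ∈ P) ∧
       (∃ x ∈ P, ∃ y ∈ P, x ≠ y ∧ ω x y = 0 ∧ x + y ∈ T)) := by
  -- basic ZMod 2 facts
  have hz01 : ∀ a : ZMod 2, a = 0 ∨ a = 1 := by decide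
  have hzadd : ∀ a b : ZMod 2, a + b = 0 → a = b := by decide
  -- characteristic two in V
  have hchar2 : ∀ v : V, v + v = 0 := by
    intro v
    have h2 : (2 : ZMod 2) = 0 := by decide
    calc v + v = (2 : ZMod 2) • v := (two_smul (ZMod 2) v).symm
      _ = 0 := by rw [h2, zero_smul]
  have hadd0 : ∀ x y : V, x + y = 0 → x = y := by
    intro x y h
    have : x = x + y + y := by rw [add_assoc, hchar2, add_zero]
    rw [h, zero_add] at this; exact this
  -- symmetry of ω
  have hsymm : ∀ x y : V, ω x y = ω y x := by
    intro x y
    have h0 := halt (x + y)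
    simp only [map_add, LinearMap.add_apply] at h0
    rw [halt x, halt y] at h0
    simp only [zero_add, add_zero] at h0
    exact (hzadd _ _ h0).symm
  -- disjointness and nonzeroness
  have hdis : ∀ v : V, v ∈ T → v ∈ P → False := fun v hT hP =>
    Set.eq_empty_iff_forall_notMem.mp hdisj v ⟨hT, hP⟩
  have hTnz : ∀ v ∈ T, v ≠ 0 := by
    intro v hv
    have : v ∈ T ∪ P := Or.inl hv
    rw [hcover] at this; exact this
  have hPnz : ∀ v ∈ P, v ≠ 0 := by
    intro v hv
    have : v ∈ T ∪ P := Or.inr hv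
    rw [hcover] at this; exact this
  have hcov : ∀ v : V, v ≠ 0 → v ∈ T ∨ v ∈ P := by
    intro v hv
    have : v ∈ T ∪ P := by rw [hcover]; exact hv
    exact this
  -- rank 1: hit any nonzero vector
  have rank1 : ∀ u : V, u ≠ 0 → ∃ z, ω z u = 1 := by
    intro u hu
    by_contra h
    push_neg at h
    apply hu
    apply hnd
    intro w
    rcases hz01 (ω u w) with h0 | h1
    · exact h0
    · exact absurd (by rw [hsymm w u]; exact h1) (h w)
  -- rank 2: realize any pattern on u, v with u, v, u+v nonzero
  have rank2 : ∀ u v : V, u ≠ 0 → v ≠ 0 → u + v ≠ 0 →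
      ∀ ε₁ ε₂ : ZMod 2, ∃ z, ω z u = ε₁ ∧ ω z v = ε₂ := by
    intro u v hu hv huv ε₁ ε₂
    obtain ⟨zu, hzu⟩ := rank1 u hu
    obtain ⟨zv, hzv⟩ := rank1 v hv
    obtain ⟨zw, hzw⟩ := rank1 (u + v) huv
    have hzw' : ω zw u + ω zw v = 1 := by
      rw [← map_add]; exact hzw
    have key : ∀ a b c₁ c₂ e₁ e₂ : ZMod 2, c₁ + c₂ = 1 →
        ∃ k₁ k₂ k₃ : ZMod 2, k₁*1 + k₂*b + k₃*c₁ = e₁ ∧ k₁*a + k₂*1 + k₃*c₂ = e₂ := by decide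
    obtain ⟨k₁, k₂, k₃, h1, h2⟩ := key (ω zu v) (ω zv u) (ω zw u) (ω zw v) ε₁ ε₂ hzw'
    refine ⟨k₁ • zu + k₂ • zv + k₃ • zw, ?_, ?_⟩
    · simp only [map_add, map_smul, LinearMap.add_apply, LinearMap.smul_apply, smul_eq_mul]
      rw [hzu]; exact h1
    · simp only [map_add, map_smul, LinearMap.add_apply, LinearMap.smul_apply, smul_eq_mul]
      rw [hzv]; exact h2
  -- rank 3: realize any pattern on independent u, v, c
  have rank3 : ∀ u v c : V, u ≠ 0 → v ≠ 0 → c ≠ 0 → u + v ≠ 0 → u + c ≠ 0 →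
      v + c ≠ 0 → u + v + c ≠ 0 →
      ∀ ε₁ ε₂ ε₃ : ZMod 2, ∃ z, ω z u = ε₁ ∧ ω z v = ε₂ ∧ ω z c = ε₃ := by
    intro u v c hu hv hc huv huc hvc huvc ε₁ ε₂ ε₃
    obtain ⟨zA, hA1, hA2⟩ := rank2 u v hu hv huv 1 0
    obtain ⟨zB, hB1, hB2⟩ := rank2 u v hu hv huv 0 1
    obtain ⟨zE, hE1, hE2⟩ := rank2 u c hu hc huc 0 1
    have hvc' : u + (v + c) ≠ 0 := by rwa [← add_assoc]
    obtain ⟨zC, hC1, hC2⟩ := rank2 u (v + c) hu hvc hvc' 0 1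
    have hC2' : ω zC v + ω zC c = 1 := by rw [← map_add]; exact hC2
    have key : ∀ a b e c₂ c₃ e₁ e₂ e₃ : ZMod 2, c₂ + c₃ = 1 →
        ∃ k₁ k₂ k₃ k₄ : ZMod 2, (k₁*1 + k₂*0 + k₃*0 + k₄*0 = e₁) ∧
          (k₁*0 + k₂*1 + k₃*e + k₄*c₂ = e₂) ∧
          (k₁*a + k₂*b + k₃*1 + k₄*c₃ = e₃) := by decide
    obtain ⟨k₁, k₂, k₃, k₄, h1, h2, h3⟩ :=
      key (ω zA c) (ω zB c) (ω zE v) (ω zC v) (ω zC c) ε₁ ε₂ ε₃ hC2'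
    refine ⟨k₁ • zA + k₂ • zB + k₃ • zE + k₄ • zC, ?_, ?_, ?_⟩
    · simp only [map_add, map_smul, LinearMap.add_apply, LinearMap.smul_apply, smul_eq_mul]
      rw [hA1, hB1, hE1, hC1]; exact h1
    · simp only [map_add, map_smul, LinearMap.add_apply, LinearMap.smul_apply, smul_eq_mul]
      rw [hA2, hB2]; exact h2
    · simp only [map_add, map_smul, LinearMap.add_apply, LinearMap.smul_apply, smul_eq_mul]
      rw [hE2]; exact h3
  -- move 1: replace x by z in a commuting P-pair with sum in P
  have move1 : ∀ x y z : V, x ∈ P → y ∈ P → ω x y = 0 → x + y ∈ P →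
      z ∈ P → ω z x = 1 → ω z y = 0 → z + y ∈ P := by
    intro x y z hx hy hω hs hz h1 h2
    have hxz : x + z ∈ T := hPP x hx z hz (by rw [hsymm]; exact h1)
    have hω2 : ω (x + y) (x + z) = 1 := by
      simp only [map_add, LinearMap.add_apply]
      rw [halt x, hsymm x z, h1, hsymm y x, hω, hsymm y z, h2]
      decide
    have := hPT (x + y) hs (x + z) hxz hω2
    have heq : (x + y) + (x + z) = z + y := by
      have h := hchar2 x
      have : (x + y) + (x + z) = (x + x) + (y + z) := by abel
      rw [this, h, zero_add, add_comm]
    rwa [heq] at this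
  -- the clash: two commuting P-pairs sharing c, sums of opposite type, anticommuting heads
  have clash : ∀ u v c : V, u ∈ P → v ∈ P → c ∈ P → ω u c = 0 → ω v c = 0 →
      u + c ∈ P → v + c ∈ T → ω u v = 1 → False := by
    intro u v c hu hv hc huc hvc hucP hvcT huv
    have huvT : u + v ∈ T := hPP u hu v hv huv
    have hω : ω (u + v) (v + c) = 1 := by
      simp only [map_add, LinearMap.add_apply]
      rw [huv, huc, halt v, hvc]
      decide
    have h := hTT (u + v) huvT (v + c) hvcT hω
    have heq : (u + v) + (v + c) = u + c := by
      have h2 := hchar2 v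
      have : (u + v) + (v + c) = u + (v + v) + c := by abel
      rw [this, h2, add_zero]
    rw [heq] at h
    exact hdis _ h hucP
  -- base case: shared element c, contradiction
  have base : ∀ u v c : V, u ∈ P → v ∈ P → c ∈ P → ω u c = 0 → ω v c = 0 →
      u + c ∈ P → v + c ∈ T → False := by
    intro u v c hu hv hc huc hvc hucP hvcT
    have huv_ne : u ≠ v := by
      rintro rfl; exact hdis _ hvcT hucP
    rcases hz01 (ω u v) with h0 | h1
    swap
    · exact clash u v c hu hv hc huc hvc hucP hvcT h1
    -- ω u v = 0 : find z with pattern (1,1,0)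
    have hu0 := hPnz u hu
    have hv0 := hPnz v hv
    have hc0 := hPnz c hc
    have huv0 : u + v ≠ 0 := fun h => huv_ne (hadd0 _ _ h)
    have huc0 : u + c ≠ 0 := hPnz _ hucP
    have hvc0 : v + c ≠ 0 := hTnz _ hvcT
    have huvc0 : u + v + c ≠ 0 := by
      intro h
      have : u = v + c := hadd0 u (v + c) (by rwa [← add_assoc])
      rw [this] at hu
      exact hdis _ hvcT hu
    obtain ⟨z, hz1, hz2, hz3⟩ := rank3 u v c hu0 hv0 hc0 huv0 huc0 hvc0 huvc0 1 1 0
    have hz0 : z ≠ 0 := by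
      intro h; rw [h] at hz1; simp at hz1
    -- normalize z into P
    obtain ⟨z', hz'P, h1, h2, h3⟩ : ∃ z' ∈ P, ω z' u = 1 ∧ ω z' v = 1 ∧ ω z' c = 0 := by
      rcases hcov z hz0 with hzT | hzP
      · refine ⟨z + u, hTP z hzT u hu hz1, ?_, ?_, ?_⟩
        · simp only [map_add, LinearMap.add_apply]; rw [hz1, halt u]; decide
        · simp only [map_add, LinearMap.add_apply]; rw [hz2, h0]; decide
        · simp only [map_add, LinearMap.add_apply]; rw [hz3, huc]; decide
      · exact ⟨z, hzP, hz1, hz2, hz3⟩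
    have hzc : z' + c ∈ P := move1 u c z' hu hc huc hucP hz'P h1 h3
    exact clash z' v c hz'P hv hc h3 hvc hzc hvcT h2
  -- extract the two pairs
  rintro ⟨⟨x, hx, y, hy, hxy, hωxy, hsP⟩, ⟨a, ha, b, hb, hab, hωab, hsT⟩⟩
  -- main auxiliary: when b ∉ {x, y, x+y}
  have main_aux : ∀ x y a b : V, x ∈ P → y ∈ P → x ≠ y → ω x y = 0 → x + y ∈ P →
      a ∈ P → b ∈ P → a ≠ b → ω a b = 0 → a + b ∈ T →
      b ≠ x → b ≠ y → b ≠ x + y → False := by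
    clear hx hy hxy hωxy hsP ha hb hab hωab hsT
    intro x y a b hx hy hxy hωxy hsP ha hb hab hωab hsT hbx hby hbxy
    have hx0 := hPnz x hx
    have hy0 := hPnz y hy
    have hb0 := hPnz b hb
    have hxy0 : x + y ≠ 0 := hPnz _ hsP
    have hxb0 : x + b ≠ 0 := fun h => hbx (hadd0 _ _ h).symm
    have hyb0 : y + b ≠ 0 := fun h => hby (hadd0 _ _ h).symm
    have hxyb0 : x + y + b ≠ 0 := fun h => hbxy (hadd0 _ _ h).symm
    rcases hz01 (ω b x) with h1 | h1 <;> rcases hz01 (ω b y) with h2 | h2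
    · -- (0,0) : two moves needed
      obtain ⟨z, hz1, hz2, hz3⟩ := rank3 x y b hx0 hy0 hb0 hxy0 hxb0 hyb0 hxyb0 1 0 1
      have hz0 : z ≠ 0 := by intro h; rw [h] at hz1; simp at hz1
      obtain ⟨z', hz'P, g1, g2, g3⟩ :
          ∃ z' ∈ P, ω z' x = 1 ∧ ω z' y = 0 ∧ ω z' b = 1 := by
        rcases hcov z hz0 with hzT | hzP
        · refine ⟨z + x, hTP z hzT x hx hz1, ?_, ?_, ?_⟩
          · simp only [map_add, LinearMap.add_apply]; rw [hz1, halt x]; decide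
          · simp only [map_add, LinearMap.add_apply]; rw [hz2, hωxy]; decide
          · simp only [map_add, LinearMap.add_apply]
            rw [hz3, hsymm x b, h1]; decide
        · exact ⟨z, hzP, hz1, hz2, hz3⟩
      have hzy : z' + y ∈ P := move1 x y z' hx hy hωxy hsP hz'P g1 g2
      have hby' : b + y ∈ P := by
        apply move1 z' y b hz'P hy g2 hzy hb _ h2
        rw [hsymm]; exact g3
      exact base y a b hy ha hb (by rw [hsymm]; exact h2) hωab
        (by rwa [add_comm] at hby') hsT
    · -- (0,1) : move on (y,x) with b
      have hbx' : b + x ∈ P := by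
        apply move1 y x b hy hx (by rw [hsymm]; exact hωxy)
          (by rwa [add_comm] at hsP) hb h2 h1
      exact base x a b hx ha hb (by rw [hsymm]; exact h1) hωab
        (by rwa [add_comm] at hbx') hsT
    · -- (1,0) : move on (x,y) with b
      have hby' : b + y ∈ P := move1 x y b hx hy hωxy hsP hb h1 h2
      exact base y a b hy ha hb (by rw [hsymm]; exact h2) hωab
        (by rwa [add_comm] at hby') hsT
    · -- (1,1) : move 2
      have hw : x + b ∈ T := hPP x hx b hb (by rw [hsymm]; exact h1)
      have hyw : ω y (x + b) = 1 := by
        simp only [map_add, LinearMap.add_apply]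
        rw [hsymm y x, hωxy, hsymm y b, h2]; decide
      have hu : y + (x + b) ∈ P := hPT y hy (x + b) hw hyw
      have heq : y + (x + b) = x + y + b := by abel
      rw [heq] at hu
      have hub : ω (x + y + b) b = 0 := by
        simp only [map_add, LinearMap.add_apply]
        rw [hsymm x b, h1, hsymm y b, h2, halt b]; decide
      have husum : (x + y + b) + b = x + y := by
        rw [add_assoc, hchar2, add_zero]
      exact base (x + y + b) a b hu ha hb hub hωab (by rwa [husum]) hsT
  -- top level case split
  by_cases hb1 : b = x ∨ b = y ∨ b = x + y
  · by_cases ha1 : a = x ∨ a = y ∨ a = x + y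
    · -- both in {x, y, x+y} : a + b lands back in P
      have habP : a + b ∈ P := by
        rcases ha1 with ha' | ha' | ha' <;> rcases hb1 with hb' | hb' | hb'
        · exact absurd (ha'.trans hb'.symm) hab
        · rw [ha', hb']; exact hsP
        · rw [ha', hb', ← add_assoc, hchar2, zero_add]; exact hy
        · rw [ha', hb', add_comm]; exact hsP
        · exact absurd (ha'.trans hb'.symm) hab
        · rw [ha', hb', show y + (x + y) = x + (y + y) from by abel, hchar2, add_zero]
          exact hx
        · rw [ha', hb', show (x + y) + x = (x + x) + y from by abel, hchar2, zero_add]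
          exact hy
        · rw [ha', hb', add_assoc, hchar2, add_zero]; exact hx
        · exact absurd (ha'.trans hb'.symm) hab
      exact hdis _ hsT habP
    · -- a ∉ {x,y,x+y} : use pair (b, a)
      push_neg at ha1
      exact main_aux x y b a hx hy hxy hωxy hsP hb ha (Ne.symm hab)
        (by rw [hsymm]; exact hωab) (by rwa [add_comm] at hsT)
        ha1.1 ha1.2.1 ha1.2.2
  · push_neg at hb1
    exact main_aux x y a b hx hy hxy hωxy hsP ha hb hab hωab hsT
      hb1.1 hb1.2.1 hb1.2.2
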